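/- arXiv:1402.0414 — 6 statements merged into one kernel-verified Lean document; each statement's English description precedes it below -/
import Mathlib

section
/- Let 2 ≤ n ≤ N be integers, let U ⊆ ℂⁿ be an open set containing 0, and let f = (f₁,…,f_N) : U → ℂᴺ be holomorphic (ℂ-analytic) on U. Assume: (i) f_N(z) = 0 for every z ∈ U whose last coordinate vanishes, z_n = 0; (ii) there is a sequence of points p^ν ∈ U with p^ν_n = 0 and p^ν → 0 such that for every ν the complex derivative Df(p^ν) : ℂⁿ → ℂᴺ has rank at most n−1, while its restriction to the hyperplane H = {v ∈ ℂⁿ : v_n = 0} has rank exactly n−1. Then ∂f_N/∂z_n(0) = 0, i.e. the N-th coordinate of Df(0)(e_n) vanishes, where e_n is the n-th standard basis vector of ℂⁿ. -/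
/-- Key computation (e.der0) in the proof of Theorem 1: if `f` is holomorphic near `0`,
`f_N` vanishes on the hyperplane `{z_n = 0}`, and along a sequence `p^ν → 0` in this
hyperplane the full derivative has rank `≤ n-1` while its restriction to the hyperplane
has rank exactly `n-1`, then `∂f_N/∂z_n(0) = 0`. -/
theorem stmt0 (n N : ℕ) (hn : 2 ≤ n) (hnN : n ≤ N)
    (U : Set (Fin n → ℂ)) (hU : IsOpen U) (h0U : (0 : Fin n → ℂ) ∈ U)
    (f : (Fin n → ℂ) → (Fin N → ℂ)) (hf : AnalyticOnNhd ℂ f U)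
    (hvanish : ∀ z ∈ U, z ⟨n - 1, by omega⟩ = 0 → f z ⟨N - 1, by omega⟩ = 0)
    (p : ℕ → (Fin n → ℂ)) (hpU : ∀ ν, p ν ∈ U)
    (hpH : ∀ ν, p ν ⟨n - 1, by omega⟩ = 0)
    (hplim : Filter.Tendsto p Filter.atTop (nhds 0))
    (hrank : ∀ ν, LinearMap.rank (fderiv ℂ f (p ν)).toLinearMap ≤ (n - 1 : ℕ))
    (hrankH : ∀ ν,
      LinearMap.rank ((fderiv ℂ f (p ν)).toLinearMap.domRestrict
        (LinearMap.ker (LinearMap.proj (R := ℂ) (φ := fun _ : Fin n => ℂ)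
          ⟨n - 1, by omega⟩))) = (n - 1 : ℕ)) :
    fderiv ℂ f 0 (Pi.single ⟨n - 1, by omega⟩ 1) ⟨N - 1, by omega⟩ = 0 := by
  set iN : Fin N := ⟨N - 1, by omega⟩
  set inn : Fin n := ⟨n - 1, by omega⟩
  set H : Submodule ℂ (Fin n → ℂ) :=
    LinearMap.ker (LinearMap.proj (R := ℂ) (φ := fun _ : Fin n => ℂ) inn)
  set en : Fin n → ℂ := Pi.single inn 1
  -- Step A: derivative along the hyperplane has vanishing last coordinate
  have hA : ∀ ν, ∀ v ∈ H, (fderiv ℂ f (p ν)) v iN = 0 := by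
    intro ν v hv
    have hvn : v inn = 0 := hv
    have hdf : HasFDerivAt f (fderiv ℂ f (p ν)) (p ν) :=
      (hf _ (hpU ν)).differentiableAt.hasFDerivAt
    have hc : HasDerivAt (fun t : ℂ => p ν + t • v) v 0 := by
      simpa using ((hasDerivAt_id (0 : ℂ)).smul_const v).const_add (p ν)
    have hdf' : HasFDerivAt f (fderiv ℂ f (p ν)) ((fun t : ℂ => p ν + t • v) 0) := by
      simpa using hdf
    have hh : HasDerivAt (fun t : ℂ => f (p ν + t • v)) ((fderiv ℂ f (p ν)) v) 0 :=
      hdf'.comp_hasDerivAt 0 hc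
    have hcoord : HasDerivAt (fun t : ℂ => f (p ν + t • v) iN)
        ((fderiv ℂ f (p ν)) v iN) 0 :=
      (ContinuousLinearMap.proj (R := ℂ) (φ := fun _ : Fin N => ℂ) iN).hasFDerivAt.comp_hasDerivAt
        0 hh
    have hev : ∀ᶠ t : ℂ in nhds 0, f (p ν + t • v) iN = 0 := by
      have hcont : Continuous (fun t : ℂ => p ν + t • v) := by continuity
      have hmem : ∀ᶠ t : ℂ in nhds 0, p ν + t • v ∈ U := by
        have : (fun t : ℂ => p ν + t • v) 0 ∈ U := by simpa using hpU ν
        exact hcont.continuousAt.eventually_mem (hU.mem_nhds this)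
      filter_upwards [hmem] with t ht
      apply hvanish _ ht
      simp [hpH ν, hvn]
    have h0 : HasDerivAt (fun _ : ℂ => (0 : Fin N → ℂ) iN) ((fderiv ℂ f (p ν)) v iN) 0 :=
      hcoord.congr_of_eventuallyEq (by filter_upwards [hev] with t ht; simpa using ht.symm)
    have := h0.unique (hasDerivAt_const 0 _)
    simpa using this
  -- Step B: per ν, the last coordinate of L e_n vanishes
  have key : ∀ ν, (fderiv ℂ f (p ν)) en iN = 0 := by
    intro ν
    set L := (fderiv ℂ f (p ν)).toLinearMap with hL
    have hWrange : LinearMap.range (L.domRestrict H) = H.map L :=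
      LinearMap.range_domRestrict _ _
    have hrW : Module.rank ℂ (H.map L) = (n - 1 : ℕ) := by
      rw [← hWrange]; exact hrankH ν
    have hfW : Module.finrank ℂ (H.map L) = n - 1 :=
      Module.finrank_eq_of_rank_eq hrW
    have hfR : Module.finrank ℂ (LinearMap.range L) ≤ n - 1 :=
      Module.finrank_le_of_rank_le (hrank ν)
    have hle : H.map L ≤ LinearMap.range L := LinearMap.map_le_range
    have heq : H.map L = LinearMap.range L :=
      Submodule.eq_of_le_of_finrank_le hle (by omega)
    have hmem : L en ∈ H.map L := by
      rw [heq]; exact LinearMap.mem_range_self L en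
    obtain ⟨v, hvH, hvL⟩ := hmem
    have h2 : L en iN = 0 := by rw [← hvL]; exact hA ν v hvH
    exact h2
  -- Step C: continuity and passage to the limit
  have hcont : ContinuousAt (fderiv ℂ f) 0 := (hf.fderiv 0 h0U).continuousAt
  have h1 : Filter.Tendsto (fun ν => fderiv ℂ f (p ν)) Filter.atTop
      (nhds (fderiv ℂ f 0)) := hcont.tendsto.comp hplim
  have hev : Continuous (fun T : (Fin n → ℂ) →L[ℂ] (Fin N → ℂ) => T en iN) :=
    (continuous_apply iN).comp (ContinuousLinearMap.apply ℂ (Fin N → ℂ) en).continuous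
  have h2 : Filter.Tendsto (fun ν => fderiv ℂ f (p ν) en iN) Filter.atTop
      (nhds (fderiv ℂ f 0 en iN)) := (hev.tendsto _).comp h1
  rw [show (fun ν => fderiv ℂ f (p ν) en iN) = fun _ => (0 : ℂ) from funext key] at h2
  exact (tendsto_nhds_unique tendsto_const_nhds h2).symm
end

section
/- Let E be a finite-dimensional real normed vector space, F a real normed vector space, π : E → F a continuous linear map, and A ⊆ E a set such that the positive tangent cone to A at 0 intersects ker π only in the zero vector. Then there exist constants c > 0 and ε > 0 such that ‖z‖ ≤ c·‖π(z)‖ for every z ∈ A with ‖z‖ < ε. -/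
open Filter Topology Metric

/-- The estimate (e.5), valid on the tangent cone `C₀(A)`, passes to points of `A` near the
origin: if the positive tangent cone of `A` at `0` meets `ker π` only in `0`, then
`‖z‖ ≤ c‖π z‖` for all `z ∈ A` close enough to `0`. -/
theorem stmt7 (E F : Type*) [NormedAddCommGroup E] [NormedSpace ℝ E]
    [FiniteDimensional ℝ E] [NormedAddCommGroup F] [NormedSpace ℝ F]
    (π : E →L[ℝ] F) (A : Set E)
    (hker : posTangentConeAt A 0 ∩ {z : E | π z = 0} ⊆ {0}) :
    ∃ c > (0 : ℝ), ∃ ε > (0 : ℝ), ∀ z ∈ A, ‖z‖ < ε → ‖z‖ ≤ c * ‖π z‖ := by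
  by_contra h
  push_neg at h
  -- extract a sequence z n ∈ A with ‖z n‖ < 1/(n+1) and (n+1)*‖π (z n)‖ < ‖z n‖
  have hseq : ∀ n : ℕ, ∃ z ∈ A, ‖z‖ < 1 / (n + 1) ∧ ((n : ℝ) + 1) * ‖π z‖ < ‖z‖ := by
    intro n
    have h1 : (0 : ℝ) < (n : ℝ) + 1 := by positivity
    have h2 : (0 : ℝ) < 1 / ((n : ℝ) + 1) := by positivity
    obtain ⟨z, hzA, hz1, hz2⟩ := h ((n : ℝ) + 1) h1 (1 / ((n : ℝ) + 1)) h2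
    exact ⟨z, hzA, hz1, hz2⟩
  choose z hzA hzsmall hzbig using hseq
  have hzpos : ∀ n, 0 < ‖z n‖ := by
    intro n
    have := hzbig n
    nlinarith [norm_nonneg ((π : E →L[ℝ] F) (z n)), norm_nonneg (z n)]
  set v : ℕ → E := fun n => ‖z n‖⁻¹ • z n with hv
  have hvsphere : ∀ n, v n ∈ sphere (0 : E) 1 := by
    intro n
    simp only [mem_sphere_iff_norm, sub_zero, hv, norm_smul, norm_inv, norm_norm]
    field_simp [(hzpos n).ne']
  obtain ⟨w, hw, φ, hφmono, hφtend⟩ :=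
    (isCompact_sphere (0 : E) 1).tendsto_subseq hvsphere
  -- w is in the positive tangent cone
  have hwcone : w ∈ posTangentConeAt A 0 := by
    refine mem_tangentConeAt_of_seq atTop (fun k => ‖z (φ k)‖₊⁻¹) (fun k => z (φ k)) ?_ ?_ ?_
    · exact tendsto_zero_iff_norm_tendsto_zero.mpr (squeeze_zero (fun _ => norm_nonneg _)
        (fun k => (hzsmall (φ k)).le)
        ((tendsto_one_div_add_atTop_nhds_zero_nat).comp hφmono.tendsto_atTop))
    · filter_upwards with k
      simpa using hzA (φ k)
    · refine hφtend.congr (fun k => ?_)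
      simp [hv, NNReal.smul_def]
  -- π w = 0
  have hπw : π w = 0 := by
    have hcont : Tendsto (fun k => π (v (φ k))) atTop (𝓝 (π w)) :=
      (π.continuous.tendsto w).comp hφtend
    have hto0 : Tendsto (fun k => π (v (φ k))) atTop (𝓝 0) := by
      rw [tendsto_zero_iff_norm_tendsto_zero]
      have hsq : ∀ k, ‖π (v (φ k))‖ ≤ 1 / ((φ k : ℝ) + 1) := by
        intro k
        have h1 := hzbig (φ k)
        have h2 : (0 : ℝ) < (φ k : ℝ) + 1 := by positivity
        have h3 : ‖π (v (φ k))‖ = ‖z (φ k)‖⁻¹ * ‖π (z (φ k))‖ := by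
          simp [hv, map_smul, norm_smul, abs_of_pos (inv_pos.mpr (hzpos (φ k)))]
        rw [h3]
        rw [inv_mul_le_iff₀ (hzpos (φ k)), mul_one_div, le_div_iff₀ h2]
        nlinarith [hzpos (φ k)]
      have htend : Tendsto (fun k => 1 / ((φ k : ℝ) + 1)) atTop (𝓝 0) := by
        apply Tendsto.comp (tendsto_one_div_add_atTop_nhds_zero_nat)
        exact hφmono.tendsto_atTop
      exact squeeze_zero (fun k => norm_nonneg _) hsq htend
    exact tendsto_nhds_unique hcont hto0
  have hw0 : w = 0 := hker ⟨hwcone, hπw⟩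
  rw [hw0] at hw
  simp at hw
end

section
/- Let E be a finite-dimensional real normed vector space, σ ⊆ E a set, and K ⊆ E a closed cone such that K intersects the positive tangent cone to σ at 0 only in the zero vector. Then there exists ε > 0 such that every z ∈ σ ∩ K with ‖z‖ < ε equals 0; in other words, the origin is (at worst) an isolated point of σ ∩ K. -/
open Filter Topology

/-- If a closed cone `K` meets the positive tangent cone of `σ` at `0` only in the zero
vector, then the origin is (at worst) an isolated point of `σ ∩ K`. -/
theorem stmt8 (E : Type*) [NormedAddCommGroup E] [NormedSpace ℝ E]
    [FiniteDimensional ℝ E] (σ K : Set E)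
    (hclosed : IsClosed K) (h0 : (0 : E) ∈ K)
    (hcone : ∀ t : ℝ, 0 ≤ t → ∀ v ∈ K, t • v ∈ K)
    (hK : K ∩ posTangentConeAt σ 0 ⊆ {0}) :
    ∃ ε > (0 : ℝ), ∀ z ∈ σ ∩ K, ‖z‖ < ε → z = 0 := by
  by_contra h
  push_neg at h
  -- choose a sequence z n ∈ σ ∩ K with 0 < ‖z n‖ < 1/(n+1)
  have hz : ∀ n : ℕ, ∃ z : E, z ∈ σ ∩ K ∧ ‖z‖ < (n + 1 : ℝ)⁻¹ ∧ z ≠ 0 := by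
    intro n
    exact h ((n + 1 : ℝ)⁻¹) (by positivity)
  choose z hzmem hznorm hzne using hz
  have hznorm_pos : ∀ n, 0 < ‖z n‖ := fun n => norm_pos_iff.2 (hzne n)
  set c : ℕ → ℝ := fun n => ‖z n‖⁻¹ with hc
  set u : ℕ → E := fun n => c n • z n with hu
  have hu_sphere : ∀ n, u n ∈ Metric.sphere (0 : E) 1 := by
    intro n
    simp only [Metric.mem_sphere, dist_zero_right, hu, norm_smul, hc,
      norm_inv, norm_norm]
    exact inv_mul_cancel₀ (hznorm_pos n).ne'
  have hcompact : IsCompact (Metric.sphere (0 : E) 1) :=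
    isCompact_sphere 0 1
  obtain ⟨v, hv_mem, φ, hφ, hφ_tendsto⟩ := hcompact.tendsto_subseq hu_sphere
  have hvne : v ≠ 0 := by
    intro hv0
    rw [hv0] at hv_mem
    simp at hv_mem
  apply hvne
  have hvK : v ∈ K := by
    refine hclosed.mem_of_tendsto hφ_tendsto (Eventually.of_forall fun n => ?_)
    exact hcone _ (inv_nonneg.2 (norm_nonneg _)) _ (hzmem (φ n)).2
  have hc_tendsto : Tendsto (fun n => c (φ n)) atTop atTop := by
    have h1 : Tendsto (fun n : ℕ => (n + 1 : ℝ)) atTop atTop :=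
      tendsto_atTop_add_const_right _ 1 tendsto_natCast_atTop_atTop
    have h2 : Tendsto c atTop atTop := by
      refine tendsto_atTop_mono (fun n => ?_) h1
      rw [hc]
      have h3 : ((n + 1 : ℝ)⁻¹)⁻¹ < (‖z n‖)⁻¹ :=
        inv_strictAnti₀ (hznorm_pos n) (hznorm n)
      rw [inv_inv] at h3
      exact h3.le
    exact h2.comp hφ.tendsto_atTop
  have hvT : v ∈ posTangentConeAt σ 0 := by
    refine mem_tangentConeAt_of_seq atTop
      (fun n => (⟨c (φ n), inv_nonneg.2 (norm_nonneg _)⟩ : NNReal)) (fun n => z (φ n))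
      (tangentConeAt.lim_zero (𝕜 := ℝ) atTop (tendsto_norm_atTop_atTop.comp hc_tendsto)
        hφ_tendsto) (Eventually.of_forall fun n => ?_) hφ_tendsto
    simpa using (hzmem (φ n)).1
  have := hK ⟨hvK, hvT⟩
  simpa using this
end

section
/- Let E be a finite-dimensional real normed vector space, σ ⊆ E a set, and K ⊆ E a closed cone such that K intersects the positive tangent cone to σ at 0 only in the zero vector. Then there exist constants c > 0 and ε > 0 such that ‖x − s‖ ≥ c·‖x‖ whenever x ∈ K and s ∈ σ satisfy ‖x‖ < ε and ‖s‖ < ε. -/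
open Filter Topology

/-- If a closed cone `K` meets the positive tangent cone of `σ` at `0` only in the zero
vector, then near the origin `‖x - s‖ ≥ c‖x‖` for `x ∈ K` and `s ∈ σ` (the estimate
`dist(p̃, σ̃) ≥ c₃|p₁|` in Lemma 1). -/
theorem stmt10 (E : Type*) [NormedAddCommGroup E] [NormedSpace ℝ E]
    [FiniteDimensional ℝ E] (σ K : Set E)
    (hclosed : IsClosed K) (h0 : (0 : E) ∈ K)
    (hcone : ∀ t : ℝ, 0 ≤ t → ∀ v ∈ K, t • v ∈ K)
    (hK : K ∩ posTangentConeAt σ 0 ⊆ {0}) :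
    ∃ c > (0 : ℝ), ∃ ε > (0 : ℝ), ∀ x ∈ K, ∀ s ∈ σ,
      ‖x‖ < ε → ‖s‖ < ε → c * ‖x‖ ≤ ‖x - s‖ := by
  by_contra hcon
  push_neg at hcon
  have H : ∀ n : ℕ, ∃ x ∈ K, ∃ s ∈ σ, ‖x‖ < ((n : ℝ) + 1)⁻¹ ∧ ‖s‖ < ((n : ℝ) + 1)⁻¹ ∧
      ‖x - s‖ < ((n : ℝ) + 1)⁻¹ * ‖x‖ := by
    intro n
    have hpos : (0 : ℝ) < ((n : ℝ) + 1)⁻¹ := by positivity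
    exact hcon _ hpos _ hpos
  choose x hxK s hsσ hx hs hlt using H
  have hxpos : ∀ n, (0 : ℝ) < ‖x n‖ := by
    intro n
    rcases (norm_nonneg (x n)).lt_or_eq with h | h
    · exact h
    · exfalso
      have := hlt n
      rw [← h, mul_zero] at this
      exact absurd this (not_lt.2 (norm_nonneg _))
  set u : ℕ → E := fun n => ‖x n‖⁻¹ • x n with hu
  have hunorm : ∀ n, ‖u n‖ = 1 := by
    intro n
    simp only [hu, norm_smul, norm_inv, norm_norm]
    exact inv_mul_cancel₀ (hxpos n).ne'
  have husphere : ∀ n, u n ∈ Metric.sphere (0 : E) 1 := by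
    intro n; simpa [mem_sphere_iff_norm] using hunorm n
  obtain ⟨L, hLs, φ, hφ, hconv⟩ := (isCompact_sphere (0 : E) 1).tendsto_subseq husphere
  have hLnorm : ‖L‖ = 1 := by simpa [mem_sphere_iff_norm] using hLs
  have huK : ∀ n, u n ∈ K := fun n =>
    hcone _ (inv_nonneg.2 (norm_nonneg _)) _ (hxK n)
  have hLK : L ∈ K := hclosed.mem_of_tendsto hconv (Eventually.of_forall fun k => huK _)
  -- norms of x (φ k) tend to 0, bounded by (k+1)⁻¹
  have hbound : ∀ k : ℕ, ‖x (φ k)‖ < ((k : ℝ) + 1)⁻¹ := by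
    intro k
    refine lt_of_lt_of_le (hx (φ k)) ?_
    apply inv_anti₀ (by positivity)
    have : k ≤ φ k := hφ.le_apply
    exact_mod_cast Nat.succ_le_succ this
  have hinv_tendsto : Tendsto (fun k => ‖x (φ k)‖⁻¹) atTop atTop := by
    apply tendsto_inv_nhdsGT_zero.comp
    rw [tendsto_nhdsWithin_iff]
    constructor
    · have h1 : Tendsto (fun k : ℕ => ((k : ℝ) + 1)⁻¹) atTop (𝓝 0) :=
        tendsto_one_div_add_atTop_nhds_zero_nat.congr (by simp [one_div])
      exact squeeze_zero (fun k => norm_nonneg _) (fun k => (hbound k).le) h1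
    · exact Eventually.of_forall fun k => hxpos _
  have hLtc : L ∈ posTangentConeAt σ 0 := by
    refine mem_tangentConeAt_of_seq atTop (fun k => ‖x (φ k)‖₊⁻¹) (fun k => s (φ k))
      (squeeze_zero_norm (fun k => (hs (φ k)).le)
        ((tendsto_one_div_add_atTop_nhds_zero_nat.comp hφ.tendsto_atTop).congr (by simp [one_div])))
      (Eventually.of_forall fun k => ?_) ?_
    · simpa using hsσ (φ k)
    · have key : ∀ k, ‖x (φ k)‖⁻¹ • s (φ k) = u (φ k) - ‖x (φ k)‖⁻¹ • (x (φ k) - s (φ k)) := by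
        intro k; simp [hu, smul_sub]
      have h2 : Tendsto (fun k => ‖x (φ k)‖⁻¹ • (x (φ k) - s (φ k))) atTop (𝓝 0) := by
        have hb : ∀ k : ℕ, ‖‖x (φ k)‖⁻¹ • (x (φ k) - s (φ k))‖ ≤ ((k : ℝ) + 1)⁻¹ := by
          intro k
          rw [norm_smul, norm_inv, norm_norm]
          have h3 : ‖x (φ k) - s (φ k)‖ ≤ ((k : ℝ) + 1)⁻¹ * ‖x (φ k)‖ := by
            refine (hlt (φ k)).le.trans ?_
            apply mul_le_mul_of_nonneg_right _ (norm_nonneg _)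
            apply inv_anti₀ (by positivity)
            exact_mod_cast Nat.succ_le_succ hφ.le_apply
          calc ‖x (φ k)‖⁻¹ * ‖x (φ k) - s (φ k)‖
              ≤ ‖x (φ k)‖⁻¹ * (((k : ℝ) + 1)⁻¹ * ‖x (φ k)‖) := by
                apply mul_le_mul_of_nonneg_left h3 (by positivity)
            _ = ((k : ℝ) + 1)⁻¹ := by
                rw [mul_comm ((k : ℝ) + 1)⁻¹, ← mul_assoc,
                  inv_mul_cancel₀ (hxpos _).ne', one_mul]
        have h1 : Tendsto (fun k : ℕ => ((k : ℝ) + 1)⁻¹) atTop (𝓝 0) :=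
          tendsto_one_div_add_atTop_nhds_zero_nat.congr (by simp [one_div])
        exact squeeze_zero_norm hb h1
      have := hconv.sub h2
      rw [sub_zero] at this
      exact (this.congr fun k => (key k).symm).congr fun k => by
          rw [NNReal.smul_def, NNReal.coe_inv, coe_nnnorm]
  have : L = 0 := hK ⟨hLK, hLtc⟩
  rw [this, norm_zero] at hLnorm
  norm_num at hLnorm
end

section
/- Let E be a finite-dimensional real normed vector space, F a real normed vector space, π : E → F a continuous linear map, and A ⊆ E a set such that the positive tangent cone to A at 0 is contained in ker π. Then π(z) = o(‖z‖) as z → 0 along A: for every ε > 0 there exists δ > 0 such that ‖π(z)‖ ≤ ε·‖z‖ for every z ∈ A with ‖z‖ < δ. -/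
open Filter Topology

/-- Estimate (e.four) of Lemma 1: if the positive tangent cone of `A` at `0` lies in
`ker π`, then `π(z) = o(‖z‖)` as `z → 0` along `A`. -/
theorem stmt11 (E F : Type*) [NormedAddCommGroup E] [NormedSpace ℝ E]
    [FiniteDimensional ℝ E] [NormedAddCommGroup F] [NormedSpace ℝ F]
    (π : E →L[ℝ] F) (A : Set E)
    (hker : posTangentConeAt A 0 ⊆ {z : E | π z = 0}) :
    ∀ ε > (0 : ℝ), ∃ δ > (0 : ℝ), ∀ z ∈ A, ‖z‖ < δ → ‖π z‖ ≤ ε * ‖z‖ := by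
  intro ε hε
  by_contra h
  push_neg at h
  have hz : ∀ n : ℕ, ∃ z ∈ A, ‖z‖ < 1 / ((n : ℝ) + 1) ∧ ε * ‖z‖ < ‖π z‖ := by
    intro n
    exact h (1 / ((n : ℝ) + 1)) (by positivity)
  choose z hzA hzn hzπ using hz
  have hzpos : ∀ n, 0 < ‖z n‖ := by
    intro n
    rcases (norm_nonneg (z n)).lt_or_eq with h' | h'
    · exact h'
    · exfalso
      have h0 : z n = 0 := norm_eq_zero.mp h'.symm
      have := hzπ n
      rw [h0] at this
      simp at this
  set u : ℕ → E := fun n => ‖z n‖⁻¹ • z n with hu_def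
  have husph : ∀ n, u n ∈ Metric.sphere (0 : E) 1 := by
    intro n
    simp only [mem_sphere_iff_norm, sub_zero, hu_def, norm_smul, norm_inv, norm_norm]
    exact inv_mul_cancel₀ (hzpos n).ne'
  obtain ⟨v, hv_mem, φ, hφ, hconv⟩ := (isCompact_sphere (0 : E) 1).tendsto_subseq husph
  have hcε : ∀ n : ℕ, (n : ℝ) + 1 ≤ ‖z (φ n)‖⁻¹ := by
    intro n
    have h2 : ((n : ℝ) + 1) ≤ ((φ n : ℝ) + 1) := by
      have : n ≤ φ n := hφ.le_apply
      exact (by have := (Nat.cast_le (α := ℝ)).mpr this; linarith)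
    have hle : ‖z (φ n)‖ ≤ ((n : ℝ) + 1)⁻¹ := by
      have := (hzn (φ n)).le
      rw [one_div] at this
      exact this.trans (inv_anti₀ (by positivity) h2)
    calc (n : ℝ) + 1 = (((n : ℝ) + 1)⁻¹)⁻¹ := (inv_inv _).symm
      _ ≤ ‖z (φ n)‖⁻¹ := inv_anti₀ (hzpos _) hle
  have hmem : v ∈ posTangentConeAt A 0 := by
    refine mem_tangentConeAt_of_seq atTop (fun n => (‖z (φ n)‖₊)⁻¹) (fun n => z (φ n)) ?_ ?_ ?_
    · exact squeeze_zero_norm (fun n => (hzn (φ n)).le)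
        (tendsto_one_div_add_atTop_nhds_zero_nat.comp hφ.tendsto_atTop)
    · exact Eventually.of_forall fun n => by simpa using hzA (φ n)
    · exact hconv.congr (fun n => by simp [hu_def, NNReal.smul_def])
  have hπv : π v = 0 := hker hmem
  have hconv2 : Tendsto (fun n => ‖π (u (φ n))‖) atTop (𝓝 0) := by
    have : Tendsto (fun n => π (u (φ n))) atTop (𝓝 (π v)) :=
      (π.continuous.tendsto v).comp hconv
    rw [hπv] at this
    simpa using this.norm
  have hεle : ∀ n, ε ≤ ‖π (u (φ n))‖ := by
    intro n
    have hpos := hzpos (φ n)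
    have : ‖π (u (φ n))‖ = ‖z (φ n)‖⁻¹ * ‖π (z (φ n))‖ := by
      simp [hu_def, map_smul, norm_smul, norm_inv, norm_norm]
    rw [this, ← div_eq_inv_mul, le_div_iff₀ hpos]
    exact (hzπ (φ n)).le
  have : ε ≤ 0 := ge_of_tendsto hconv2 (Eventually.of_forall hεle)
  linarith
end

section
/- Let d ≥ 1, let V ⊆ ℂ^d be an open set, and let c > 0 be a constant such that for every p ∈ V the open ball of radius c·‖p‖ centered at p is contained in V. Let h : V → ℂ be holomorphic (ℂ-differentiable at every point of V) and suppose that h(z) = o(‖z‖) as z → 0 along V, i.e. for every ε > 0 there is δ > 0 with |h(z)| ≤ ε‖z‖ for all z ∈ V with ‖z‖ < δ. Then the derivative of h tends to 0 at the origin along V: ‖Dh(p)‖ → 0 as p → 0 with p ∈ V; in particular all partial derivatives ∂h/∂z_k(p) tend to 0. -/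
open Filter Topology

/-- Step (e.eight) of Lemma 1, via the Schwarz/Cauchy estimate: if `V` contains a ball of
radius `c‖p‖` around each of its points `p`, `h` is holomorphic on `V`, and `h(z) = o(‖z‖)`
as `z → 0` along `V`, then `‖Dh(p)‖ → 0` as `p → 0` along `V`. -/
theorem stmt12 (d : ℕ) (hd : 1 ≤ d) (V : Set (Fin d → ℂ)) (hV : IsOpen V)
    (c : ℝ) (hc : 0 < c) (hball : ∀ p ∈ V, Metric.ball p (c * ‖p‖) ⊆ V)
    (h : (Fin d → ℂ) → ℂ) (hh : ∀ p ∈ V, DifferentiableAt ℂ h p)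
    (hsmall : ∀ ε > (0 : ℝ), ∃ δ > (0 : ℝ), ∀ z ∈ V, ‖z‖ < δ → ‖h z‖ ≤ ε * ‖z‖) :
    Filter.Tendsto (fun p => ‖fderiv ℂ h p‖) (𝓝[V] 0) (𝓝 0) := by
  rw [Metric.tendsto_nhdsWithin_nhds]
  intro ε hε
  have h1c : (0:ℝ) < 1 + c := by linarith
  set ε' : ℝ := ε * c / (6 * (1 + c)) with hε'def
  have hε' : 0 < ε' := by positivity
  obtain ⟨δ, hδ, hδb⟩ := hsmall ε' hε'
  refine ⟨δ / (1 + c), by positivity, ?_⟩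
  intro p hp hpd
  rw [dist_eq_norm, sub_zero] at hpd
  rw [Real.dist_eq, sub_zero, abs_of_nonneg (norm_nonneg _)]
  -- case p = 0
  by_cases hp0 : p = 0
  · subst hp0
    -- h 0 = 0 and fderiv = 0
    have hV0 : V ∈ 𝓝 (0 : Fin d → ℂ) := hV.mem_nhds hp
    have hh0 : h 0 = 0 := by
      have := hδb 0 hp (by simpa using hδ)
      have h0 : ‖h 0‖ ≤ 0 := by simpa using this
      exact norm_le_zero_iff.mp h0
    have hlo : HasFDerivAt h (0 : (Fin d → ℂ) →L[ℂ] ℂ) 0 := by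
      rw [hasFDerivAt_iff_isLittleO_nhds_zero]
      rw [Asymptotics.isLittleO_iff]
      intro C hC
      obtain ⟨δ₂, hδ₂, hδ₂b⟩ := hsmall C hC
      have : Metric.ball (0 : Fin d → ℂ) δ₂ ∩ V ∈ 𝓝 (0 : Fin d → ℂ) :=
        Filter.inter_mem (Metric.ball_mem_nhds _ hδ₂) hV0
      filter_upwards [this] with z hz
      simp only [hh0, ContinuousLinearMap.zero_apply, sub_zero, add_zero, zero_add]
      exact hδ₂b z hz.2 (by simpa using hz.1)
    rw [hlo.fderiv]
    simpa using hε
  · -- main case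
    have hpn : (0:ℝ) < ‖p‖ := norm_pos_iff.mpr hp0
    set r : ℝ := c * ‖p‖ with hrdef
    have hr : 0 < r := by positivity
    set M : ℝ := ε' * ((1 + c) * ‖p‖) with hMdef
    have hM : 0 < M := by positivity
    -- bound on h on the ball
    have hbd : ∀ z ∈ Metric.ball p r, ‖h z‖ ≤ M := by
      intro z hz
      have hzV : z ∈ V := hball p hp hz
      have hzn : ‖z‖ ≤ (1 + c) * ‖p‖ := by
        have := mem_ball_iff_norm.mp hz
        calc ‖z‖ = ‖p + (z - p)‖ := by ring_nf
          _ ≤ ‖p‖ + ‖z - p‖ := norm_add_le _ _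
          _ ≤ ‖p‖ + c * ‖p‖ := by linarith [this.le]
          _ = (1 + c) * ‖p‖ := by ring
      have hzδ : ‖z‖ < δ := by
        have : (1 + c) * ‖p‖ < δ := by
          have := (lt_div_iff₀ h1c).mp hpd
          linarith
        linarith
      calc ‖h z‖ ≤ ε' * ‖z‖ := hδb z hzV hzδ
        _ ≤ ε' * ((1 + c) * ‖p‖) := by nlinarith
    have hpball : p ∈ Metric.ball p r := Metric.mem_ball_self hr
    -- bound fderiv via Schwarz along complex lines
    have key : ∀ v : Fin d → ℂ, ‖v‖ = 1 → ‖fderiv ℂ h p v‖ ≤ 3 * M / r := by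
      intro v hv
      set g : ℂ → ℂ := fun t => h (p + t • v) with hgdef
      have hline : ∀ t : ℂ, ‖t‖ < r → p + t • v ∈ Metric.ball p r := by
        intro t ht
        rw [mem_ball_iff_norm]
        simpa [norm_smul, hv] using ht
      have hgd : DifferentiableOn ℂ g (Metric.ball (0:ℂ) r) := by
        intro t ht
        have ht' : ‖t‖ < r := by simpa using mem_ball_iff_norm.mp ht
        have hmem := hline t ht'
        have hdiff : DifferentiableAt ℂ h (p + t • v) := hh _ (hball p hp hmem)
        have hL : DifferentiableAt ℂ (fun t : ℂ => p + t • v) t := by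
          apply DifferentiableAt.const_add
          exact (differentiableAt_id.smul_const v)
        exact (hdiff.comp t hL).differentiableWithinAt
      have hmaps : Set.MapsTo g (Metric.ball (0:ℂ) r) (Metric.ball (g 0) (3 * M)) := by
        intro t ht
        have ht' : ‖t‖ < r := by simpa using mem_ball_iff_norm.mp ht
        rw [mem_ball_iff_norm]
        have h1 : ‖g t‖ ≤ M := hbd _ (hline t ht')
        have h2 : ‖g 0‖ ≤ M := by
          have : g 0 = h p := by simp [hgdef]
          rw [this]; exact hbd p hpball
        calc ‖g t - g 0‖ ≤ ‖g t‖ + ‖g 0‖ := norm_sub_le _ _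
          _ ≤ 2 * M := by linarith
          _ < 3 * M := by linarith
      have hschwarz := Complex.norm_deriv_le_div_of_mapsTo_ball hgd (hmaps.mono_right Metric.ball_subset_closedBall) hr
      -- deriv g 0 = fderiv ℂ h p v
      have hderiv : HasDerivAt g (fderiv ℂ h p v) 0 := by
        have hL : HasDerivAt (fun t : ℂ => p + t • v) v 0 := by
          simpa using ((hasDerivAt_id (0:ℂ)).smul_const v).const_add p
        have hdiff : DifferentiableAt ℂ h p := hh p hp
        have hF : HasFDerivAt h (fderiv ℂ h p) (p + (0:ℂ) • v) := by
          simpa using hdiff.hasFDerivAt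
        have := hF.comp_hasDerivAt (0:ℂ) hL
        exact this
      rw [hderiv.deriv] at hschwarz
      exact hschwarz
    -- conclude operator norm bound
    have hop : ‖fderiv ℂ h p‖ ≤ 3 * M / r := by
      apply ContinuousLinearMap.opNorm_le_bound _ (by positivity)
      intro x
      by_cases hx : x = 0
      · simp [hx]
      · have hxn : (0:ℝ) < ‖x‖ := norm_pos_iff.mpr hx
        have hv : ‖(‖x‖⁻¹ • x)‖ = 1 := norm_smul_inv_norm hx
        have hxe : x = ‖x‖ • (‖x‖⁻¹ • x) := by
          rw [smul_smul]; rw [mul_inv_cancel₀ hxn.ne', one_smul]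
        calc ‖fderiv ℂ h p x‖ = ‖fderiv ℂ h p (‖x‖ • (‖x‖⁻¹ • x))‖ := by rw [← hxe]
          _ = ‖x‖ * ‖fderiv ℂ h p (‖x‖⁻¹ • x)‖ := by
              rw [(fderiv ℂ h p).map_smul_of_tower]
              rw [norm_smul, Real.norm_eq_abs, abs_of_pos hxn]
          _ ≤ ‖x‖ * (3 * M / r) := by
              exact mul_le_mul_of_nonneg_left (key _ hv) hxn.le
          _ = 3 * M / r * ‖x‖ := by ring
    -- 3 * M / r = ε / 2 < ε
    have : 3 * M / r = ε / 2 := by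
      rw [hMdef, hrdef, hε'def]
      field_simp
      ring
    rw [this] at hop
    linarith
end
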